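/- For every x ∈ ℝ, lim_n F(a_n x + b_n)^n = Λ(x). That is, generalized Weibull distributions belong to the domain of attraction for maxima of the Gumbel law, with norming constants a_n and b_n. -/

import Mathlib

open Filter Set

lemma aux_pow18 (c : ℕ → ℝ) (L : ℝ) (hL : 0 < L)
    (hc : Tendsto c atTop (nhds L)) :
    Tendsto (fun n : ℕ => (1 - c n / n) ^ n) atTop (nhds (Real.exp (-L))) := by
  have hu : Tendsto (fun n : ℕ => c n / n) atTop (nhds 0) :=
    hc.div_atTop tendsto_natCast_atTop_atTop
  have hcpos : ∀ᶠ n : ℕ in atTop, 0 < c n := hc.eventually_const_lt hL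
  have h1 : HasDerivAt (fun u : ℝ => Real.log (1 - u)) (-1) 0 := by
    have h2 : HasDerivAt (fun u : ℝ => 1 - u) (-1) 0 := by
      simpa using (hasDerivAt_id (0:ℝ)).const_sub 1
    have h3 := (Real.hasDerivAt_log (by norm_num : (1:ℝ) - 0 ≠ 0)).comp 0 h2
    simpa [Function.comp_def] using h3
  have hslope : Tendsto (fun u : ℝ => Real.log (1 - u) / u)
      (nhdsWithin 0 {(0:ℝ)}ᶜ) (nhds (-1)) := by
    have := hasDerivAt_iff_tendsto_slope.mp h1
    refine this.congr fun u => ?_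
    simp [slope_def_field, div_eq_mul_inv]
  have hune : Tendsto (fun n : ℕ => c n / n) atTop (nhdsWithin 0 {(0:ℝ)}ᶜ) := by
    refine tendsto_nhdsWithin_of_tendsto_nhds_of_eventually_within _ hu ?_
    filter_upwards [hcpos, eventually_gt_atTop 0] with n h1 h2
    exact (div_pos h1 (by positivity)).ne'
  have hlog : Tendsto (fun n : ℕ => Real.log (1 - c n / n) / (c n / n)) atTop (nhds (-1)) :=
    hslope.comp hune
  have hmain : Tendsto (fun n : ℕ => c n * (Real.log (1 - c n / n) / (c n / n)))
      atTop (nhds (-L)) := by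
    have := hc.mul hlog
    simpa using this
  have hexp := (Real.continuous_exp.tendsto _).comp hmain
  refine Tendsto.congr' ?_ hexp
  have hult : ∀ᶠ n : ℕ in atTop, c n / n < 1 := hu.eventually_lt_const one_pos
  filter_upwards [hcpos, hult, eventually_gt_atTop 0] with n h1 h2 h3
  have hn : (0:ℝ) < n := by exact_mod_cast h3
  have hupos : 0 < c n / n := div_pos h1 hn
  have heq : c n * (Real.log (1 - c n / n) / (c n / n)) = n * Real.log (1 - c n / n) := by
    field_simp
  rw [Function.comp_apply, heq, Real.exp_nat_mul, Real.exp_log (by linarith)]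

/-- Generalized Weibull distributions belong to the domain of attraction for maxima
of the Gumbel law: with the canonical norming constants `a_n`, `b_n`, for every `x`,
`F(a_n x + b_n)^n → Λ(x) = exp(-e^{-x})`. -/
theorem stmt_18 (K C α τ x₁ : ℝ) (hK : 0 < K) (hC : 0 < C) (hα : 0 < α) (hτ : 1 ≤ τ)
    (hx₁ : 0 < x₁)
    (hanti : StrictAntiOn (fun x : ℝ => K * x ^ α * Real.exp (-C * x ^ τ)) (Set.Ici x₁))
    (hlim : Tendsto (fun x : ℝ => K * x ^ α * Real.exp (-C * x ^ τ)) atTop (nhds 0))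
    (hrange : ∀ x ≥ x₁, K * x ^ α * Real.exp (-C * x ^ τ) ∈ Set.Ioc (0 : ℝ) 1)
    (F : ℝ → ℝ) (hF : ∀ x ≥ x₁, F x = 1 - K * x ^ α * Real.exp (-C * x ^ τ))
    (b : ℕ → ℝ)
    (hb : ∀ᶠ n : ℕ in atTop,
      x₁ ≤ b n ∧ K * b n ^ α * Real.exp (-C * b n ^ τ) = 1 / (n : ℝ))
    (a : ℕ → ℝ) (ha : ∀ n, a n = 1 / (C * τ * b n ^ (τ - 1) - α / b n)) :
    ∀ x : ℝ,
      Tendsto (fun n : ℕ => F (a n * x + b n) ^ n) atTop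
        (nhds (Real.exp (-Real.exp (-x)))) := by
  classical
  intro x
  have hτ0 : (0:ℝ) < τ := lt_of_lt_of_le one_pos hτ
  set f : ℝ → ℝ := fun t => K * t ^ α * Real.exp (-C * t ^ τ) with hfdef
  have hfapp : ∀ t : ℝ, f t = K * t ^ α * Real.exp (-C * t ^ τ) := fun t => by rw [hfdef]
  have hb1 : ∀ᶠ n : ℕ in atTop, x₁ ≤ b n := hb.mono fun n hn => hn.1
  have hb2 : ∀ᶠ n : ℕ in atTop, f (b n) = 1 / (n:ℝ) :=
    hb.mono fun n hn => by rw [hfapp]; exact hn.2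
  -- b → atTop
  have hbtop : Tendsto b atTop atTop := by
    rw [tendsto_atTop]
    intro M
    have hM'x : x₁ ≤ max M x₁ := le_max_right _ _
    have hfM : 0 < f (max M x₁) := by rw [hfapp]; exact (hrange _ hM'x).1
    have h1 : ∀ᶠ n : ℕ in atTop, 1 / (n:ℝ) < f (max M x₁) :=
      tendsto_one_div_atTop_nhds_zero_nat.eventually_lt_const hfM
    filter_upwards [hb1, hb2, h1] with n hn1 hn2 h2
    by_contra hlt
    push_neg at hlt
    have hbM' : b n < max M x₁ := lt_of_lt_of_le hlt (le_max_left _ _)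
    have := hanti hn1 hM'x hbM'
    rw [hn2] at this
    linarith
  have hbpos : ∀ᶠ n : ℕ in atTop, 0 < b n := hbtop.eventually_gt_atTop 0
  have hb1le : ∀ᶠ n : ℕ in atTop, 1 ≤ b n := hbtop.eventually_ge_atTop 1
  have hbτ : Tendsto (fun n : ℕ => b n ^ τ) atTop atTop :=
    (tendsto_rpow_atTop hτ0).comp hbtop
  have hbpow1 : ∀ᶠ n : ℕ in atTop, 1 ≤ b n ^ (τ - 1) := by
    filter_upwards [hb1le] with n h3
    calc (1:ℝ) = 1 ^ (τ-1) := (Real.one_rpow _).symm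
    _ ≤ b n ^ (τ-1) := Real.rpow_le_rpow zero_le_one h3 (by linarith)
  have hmulpow : ∀ᶠ n : ℕ in atTop, b n ^ (τ - 1) * b n = b n ^ τ := by
    filter_upwards [hbpos] with n hn
    rw [← Real.rpow_add_one hn.ne' (τ-1)]
    ring_nf
  -- a n / b n → 0
  have hratio : Tendsto (fun n : ℕ => a n / b n) atTop (nhds 0) := by
    have h2 : Tendsto (fun n : ℕ => C * τ * b n ^ τ - α) atTop atTop := by
      apply tendsto_atTop_add_const_right
      exact hbτ.const_mul_atTop (by positivity)
    have h3 : Tendsto (fun n : ℕ => (C * τ * b n ^ τ - α)⁻¹) atTop (nhds 0) :=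
      h2.inv_tendsto_atTop
    refine h3.congr' ?_
    filter_upwards [hbpos, hmulpow] with n hn hm
    rw [ha n, div_div, ← hm]
    rw [sub_mul, div_mul_cancel₀ _ hn.ne', one_div]
    ring_nf
  set s : ℕ → ℝ := fun n => a n * x with hsdef
  set q : ℕ → ℝ := fun n => a n * x + b n with hqdef
  have hs : ∀ n, s n = a n * x := fun n => by rw [hsdef]
  have hq : ∀ n, q n = a n * x + b n := fun n => by rw [hqdef]
  have hqs : ∀ n, q n = s n + b n := fun n => by rw [hq, hs]
  have hstop : Tendsto (fun n : ℕ => s n / b n) atTop (nhds 0) := by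
    have := hratio.mul_const x
    rw [zero_mul] at this
    exact this.congr fun n => by rw [hs]; ring
  have habs : Tendsto (fun n : ℕ => |s n| / b n) atTop (nhds 0) := by
    have := hstop.abs
    rw [abs_zero] at this
    refine this.congr' ?_
    filter_upwards [hbpos] with n hn
    rw [abs_div, abs_of_pos hn]
  have hhalf : ∀ᶠ n : ℕ in atTop, |s n| ≤ b n / 2 := by
    filter_upwards [habs.eventually_lt_const (by norm_num : (0:ℝ) < 1/2), hbpos] with n h1 h2
    rw [div_lt_iff₀ h2] at h1
    linarith
  have hq_ge : ∀ᶠ n : ℕ in atTop, b n / 2 ≤ q n := by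
    filter_upwards [hhalf] with n h1
    have := neg_abs_le (s n)
    rw [hqs]
    linarith
  have hbhalf : Tendsto (fun n : ℕ => b n / 2) atTop atTop :=
    hbtop.atTop_div_const two_pos
  have hqtop : Tendsto q atTop atTop := tendsto_atTop_mono' _ hq_ge hbhalf
  have hq_x₁ : ∀ᶠ n : ℕ in atTop, x₁ ≤ q n := hqtop.eventually_ge_atTop x₁
  have hqpos : ∀ᶠ n : ℕ in atTop, 0 < q n := hqtop.eventually_gt_atTop 0
  -- the log transform and its derivative
  set g : ℝ → ℝ := fun t => Real.log K + α * Real.log t - C * t ^ τ with hgdef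
  set D : ℝ → ℝ := fun t => α * t⁻¹ - C * (τ * t ^ (τ - 1)) with hDdef
  have hDapp : ∀ t : ℝ, D t = α * t⁻¹ - C * (τ * t ^ (τ - 1)) := fun t => by rw [hDdef]
  have hgd : ∀ t : ℝ, 0 < t → HasDerivAt g (D t) t := by
    intro t ht
    have h1 : HasDerivAt (fun u : ℝ => Real.log K + α * Real.log u) (α * t⁻¹) t :=
      ((Real.hasDerivAt_log ht.ne').const_mul α).const_add _
    have h2 : HasDerivAt (fun u : ℝ => C * u ^ τ) (C * (τ * t ^ (τ - 1))) t :=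
      (Real.hasDerivAt_rpow_const (Or.inl ht.ne')).const_mul C
    rw [hgdef, hDapp]
    exact h1.sub h2
  have hfg : ∀ t : ℝ, 0 < t → f t = Real.exp (g t) := by
    intro t ht
    have hg' : g t = Real.log K + Real.log t * α + -C * t ^ τ := by rw [hgdef]; ring
    rw [hfapp, hg', Real.exp_add, Real.exp_add, Real.exp_log hK, ← Real.rpow_def_of_pos ht]
  -- MVT point
  set P : ℕ → ℝ → Prop :=
    fun n c => g (q n) - g (b n) = D c * s n ∧ |c - b n| ≤ |s n| with hPdef
  have hexists : ∀ᶠ n : ℕ in atTop, ∃ c, P n c := by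
    filter_upwards [hhalf, hbpos] with n hs2 hb0
    simp only [hPdef]
    have hposI : ∀ t : ℝ, min (b n) (q n) ≤ t → 0 < t := by
      intro t ht
      have h1 : b n / 2 ≤ min (b n) (q n) := by
        apply le_min (by linarith)
        rw [hqs]
        have := neg_abs_le (s n)
        linarith
      linarith
    rcases lt_trichotomy (s n) 0 with hsn | hsn | hsn
    · have hlt : q n < b n := by rw [hqs]; linarith
      obtain ⟨ξ, hmem, hξ⟩ := exists_hasDerivAt_eq_slope g D hlt
        (fun t ht => (hgd t (hposI t (by rw [min_eq_right hlt.le]; exact ht.1)))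
          |>.continuousAt.continuousWithinAt)
        (fun t ht => hgd t (hposI t (by rw [min_eq_right hlt.le]; exact ht.1.le)))
      refine ⟨ξ, ?_, ?_⟩
      · rw [eq_div_iff (sub_ne_zero.mpr hlt.ne')] at hξ
        have hbq : b n - q n = -(s n) := by rw [hqs]; ring
        rw [hbq, mul_neg] at hξ
        linarith
      · have h1 : q n - b n = s n := by rw [hqs]; ring
        rw [abs_of_neg hsn, abs_le]
        constructor
        · linarith [hmem.1, h1]
        · linarith [hmem.2]
    · refine ⟨b n, ?_, by simpa using hsn.le.trans (abs_nonneg _)⟩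
      have hqb : q n = b n := by rw [hqs, hsn]; ring
      rw [hqb, hsn, mul_zero, sub_self]
    · have hlt : b n < q n := by rw [hqs]; linarith
      obtain ⟨ξ, hmem, hξ⟩ := exists_hasDerivAt_eq_slope g D hlt
        (fun t ht => (hgd t (hposI t (by rw [min_eq_left hlt.le]; exact ht.1)))
          |>.continuousAt.continuousWithinAt)
        (fun t ht => hgd t (hposI t (by rw [min_eq_left hlt.le]; exact ht.1.le)))
      refine ⟨ξ, ?_, ?_⟩
      · rw [eq_div_iff (sub_ne_zero.mpr hlt.ne')] at hξ
        have hbq : q n - b n = s n := by rw [hqs]; ring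
        rw [hbq] at hξ
        linarith
      · have h1 : q n - b n = s n := by rw [hqs]; ring
        rw [abs_of_pos hsn, abs_le]
        constructor
        · linarith [hmem.1]
        · linarith [hmem.2, h1]
  set ξ : ℕ → ℝ := fun n => if h : ∃ c, P n c then h.choose else b n with hξdef
  have hξP : ∀ᶠ n : ℕ in atTop, P n (ξ n) := by
    filter_upwards [hexists] with n hn
    simp only [hξdef, dif_pos hn]
    exact hn.choose_spec
  have hξP' : ∀ᶠ n : ℕ in atTop,
      g (q n) - g (b n) = D (ξ n) * s n ∧ |ξ n - b n| ≤ |s n| := by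
    filter_upwards [hξP] with n hn
    rw [hPdef] at hn
    exact hn
  have hξlow : ∀ᶠ n : ℕ in atTop, b n / 2 ≤ ξ n := by
    filter_upwards [hξP', hhalf] with n h1 h2
    have := (abs_le.mp (h1.2.trans h2)).1
    linarith
  have hξtop : Tendsto ξ atTop atTop := tendsto_atTop_mono' _ hξlow hbhalf
  have hξpos : ∀ᶠ n : ℕ in atTop, 0 < ξ n := hξtop.eventually_gt_atTop 0
  have hξratio : Tendsto (fun n : ℕ => ξ n / b n) atTop (nhds 1) := by
    have h0 : Tendsto (fun n : ℕ => ξ n / b n - 1) atTop (nhds 0) := by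
      apply squeeze_zero_norm' ?_ habs
      filter_upwards [hξP', hbpos] with n h1 h2
      have heq2 : ξ n / b n - 1 = (ξ n - b n) / b n := by field_simp
      calc ‖ξ n / b n - 1‖ = |ξ n - b n| / b n := by
            rw [Real.norm_eq_abs, heq2, abs_div, abs_of_pos h2]
      _ ≤ |s n| / b n := (div_le_div_iff_of_pos_right h2).mpr h1.2
    have := h0.add_const 1
    simpa using this
  -- D (b n) < 0 eventually, and a n * D (b n) = -1
  have hCτ : (0:ℝ) < C * τ := by positivity
  have hDb : ∀ᶠ n : ℕ in atTop, D (b n) < 0 := by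
    have h1 : Tendsto (fun n : ℕ => α * (b n)⁻¹) atTop (nhds 0) := by
      have := hbtop.inv_tendsto_atTop.const_mul α
      simpa using this
    filter_upwards [h1.eventually_lt_const hCτ, hbpow1] with n h2 h3
    have h4 : C * τ ≤ C * (τ * b n ^ (τ - 1)) := by nlinarith
    rw [hDapp]
    linarith
  have haD : ∀ᶠ n : ℕ in atTop, a n * D (b n) = -1 := by
    filter_upwards [hDb, hbpos] with n h1 h2
    have hd : C * τ * b n ^ (τ - 1) - α / b n = -(D (b n)) := by
      rw [hDapp, div_eq_mul_inv]; ring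
    have hne : D (b n) ≠ 0 := h1.ne
    rw [ha n, hd]
    field_simp
  -- the ratio D (ξ n) / D (b n) tends to 1
  have hδ : Tendsto (fun n : ℕ => D (ξ n) / D (b n)) atTop (nhds 1) := by
    have t1 : Tendsto (fun n : ℕ => ξ n * b n ^ (τ - 1)) atTop atTop := by
      refine tendsto_atTop_mono' _ ?_ hbhalf
      filter_upwards [hξlow, hbpow1, hbpos] with n h1 h2 h3
      have hξ0 : 0 ≤ ξ n := by linarith
      calc b n / 2 ≤ ξ n := h1
      _ ≤ ξ n * b n ^ (τ-1) := le_mul_of_one_le_right hξ0 h2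
    have t1' : Tendsto (fun n : ℕ => α * (ξ n * b n ^ (τ - 1))⁻¹) atTop (nhds 0) := by
      have := t1.inv_tendsto_atTop.const_mul α
      simpa using this
    have t2 : Tendsto (fun n : ℕ => (ξ n / b n) ^ (τ - 1)) atTop (nhds 1) := by
      have hcont : ContinuousAt (fun y : ℝ => y ^ (τ - 1)) 1 :=
        Real.continuousAt_rpow_const 1 (τ - 1) (Or.inl one_ne_zero)
      have := hcont.tendsto.comp hξratio
      simpa [Function.comp_def] using this
    have t3 : Tendsto (fun n : ℕ => b n * b n ^ (τ - 1)) atTop atTop := by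
      refine tendsto_atTop_mono' _ ?_ hbhalf
      filter_upwards [hbpow1, hbpos] with n h2 h3
      calc b n / 2 ≤ b n := by linarith
      _ ≤ b n * b n ^ (τ-1) := le_mul_of_one_le_right h3.le h2
    have hu : Tendsto
        (fun n : ℕ => α * (ξ n * b n ^ (τ - 1))⁻¹ - C * (τ * (ξ n / b n) ^ (τ - 1)))
        atTop (nhds (-(C * τ))) := by
      have := t1'.sub ((t2.const_mul τ).const_mul C)
      simpa using this
    have hv : Tendsto (fun n : ℕ => α * (b n * b n ^ (τ - 1))⁻¹ - C * τ)
        atTop (nhds (-(C * τ))) := by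
      have h4 : Tendsto (fun n : ℕ => α * (b n * b n ^ (τ - 1))⁻¹) atTop (nhds 0) := by
        have := t3.inv_tendsto_atTop.const_mul α
        simpa using this
      have := h4.sub_const (C * τ)
      simpa using this
    have hquot : Tendsto
        (fun n : ℕ => (α * (ξ n * b n ^ (τ - 1))⁻¹ - C * (τ * (ξ n / b n) ^ (τ - 1))) /
          (α * (b n * b n ^ (τ - 1))⁻¹ - C * τ)) atTop (nhds 1) := by
      have h5 := hu.div hv (neg_ne_zero.mpr hCτ.ne')
      have h6 : -(C * τ) / -(C * τ) = 1 := div_self (neg_ne_zero.mpr hCτ.ne')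
      rwa [h6] at h5
    refine hquot.congr' ?_
    filter_upwards [hξpos, hbpos, hDb, hbpow1] with n h1 h2 h3 h4
    have he : (0:ℝ) < b n ^ (τ - 1) := by linarith
    have hu' : α * (ξ n * b n ^ (τ - 1))⁻¹ - C * (τ * (ξ n / b n) ^ (τ - 1))
        = D (ξ n) / b n ^ (τ - 1) := by
      rw [Real.div_rpow h1.le h2.le, hDapp]
      field_simp
    have hv' : α * (b n * b n ^ (τ - 1))⁻¹ - C * τ = D (b n) / b n ^ (τ - 1) := by
      rw [hDapp]
      field_simp
    rw [hu', hv', div_div_div_cancel_right₀ he.ne']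
  -- the gap g (q n) - g (b n) → -x
  have hgap : Tendsto (fun n : ℕ => g (q n) - g (b n)) atTop (nhds (-x)) := by
    have h1 : Tendsto (fun n : ℕ => D (ξ n) / D (b n) * (-1) * x) atTop (nhds (-x)) := by
      have := (hδ.mul_const (-1)).mul_const x
      simpa using this
    refine h1.congr' ?_
    filter_upwards [hξP', haD, hDb] with n h1 h2 h3
    rw [h1.1, hs]
    have h4 : a n = -1 / D (b n) := by rw [eq_div_iff h3.ne]; linarith [h2]
    rw [h4]
    field_simp
  -- n * (1 - F (q n)) → exp (-x)
  have hcn : Tendsto (fun n : ℕ => (n:ℝ) * (1 - F (q n))) atTop (nhds (Real.exp (-x))) := by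
    have hexp := (Real.continuous_exp.tendsto _).comp hgap
    refine hexp.congr' ?_
    filter_upwards [hb2, hq_x₁, hbpos, hqpos, eventually_gt_atTop 0] with n h1 h2 h3 h4 h5
    have hn0 : (0:ℝ) < n := by exact_mod_cast h5
    have hFq : 1 - F (q n) = f (q n) := by rw [hF _ h2, hfapp]; ring
    rw [Function.comp_apply, Real.exp_sub, ← hfg _ h4, ← hfg _ h3, h1, hFq]
    rw [div_div_eq_mul_div, div_one, mul_comm]
  -- conclude
  have hfinal := aux_pow18 (fun n : ℕ => (n:ℝ) * (1 - F (q n))) (Real.exp (-x))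
    (Real.exp_pos _) hcn
  refine hfinal.congr' ?_
  filter_upwards [eventually_gt_atTop 0] with n hn
  have hn0 : (n:ℝ) ≠ 0 := by positivity
  have : 1 - (n:ℝ) * (1 - F (q n)) / n = F (q n) := by field_simp; ring
  rw [this, hq]
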